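/- Let ℓ₁, ℓ₂ be positive integers with ℓ₁ℓ₂ even. Then the number of self-complementary ideals of [ℓ₁]×[ℓ₂] equals the binomial coefficient C(⌊ℓ₁/2⌋ + ⌊ℓ₂/2⌋, ⌊ℓ₁/2⌋). -/

import Mathlib

open Finset

/-- An ideal (downward-closed subset, possibly empty) of a finite poset. -/
def IsIdeal {P : Type*} [PartialOrder P] (I : Finset P) : Prop :=
  ∀ a ∈ I, ∀ b, b ≤ a → b ∈ I

/-- A self-complementary ideal with respect to an involution `φ`. -/
def IsSCIdeal {P : Type*} [PartialOrder P] (φ : P → P) (I : Finset P) : Prop :=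
  IsIdeal I ∧ ∀ a, a ∈ I ↔ φ a ∉ I

/-- The flip graph on self-complementary ideals: two ideals are adjacent when they
differ in exactly one element each way. -/
def FlipGraph {P : Type*} [PartialOrder P] [DecidableEq P] (φ : P → P) :
    SimpleGraph {I : Finset P // IsSCIdeal φ I} where
  Adj I J := I ≠ J ∧ (I.1 \ J.1).card = 1 ∧ (J.1 \ I.1).card = 1
  symm := ⟨fun _ _ h => ⟨h.1.symm, h.2.2, h.2.1⟩⟩
  loopless := ⟨fun _ h => h.1 rfl⟩

/-- Eccentricity of a vertex: its maximum distance to any vertex. -/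
noncomputable def eccentricity {V : Type*} (G : SimpleGraph V) (v : V) : ℕ :=
  ⨆ u, G.dist v u

/-- Diameter of a graph: the maximum eccentricity. -/
noncomputable def graphDiam {V : Type*} (G : SimpleGraph V) : ℕ :=
  ⨆ v, eccentricity G v

/-- Radius of a graph: the minimum eccentricity. -/
noncomputable def graphRadius {V : Type*} (G : SimpleGraph V) : ℕ :=
  ⨅ v, eccentricity G v

/-- The order-reversing involution `aᵢ ↦ ℓᵢ + 1 - aᵢ` on a product of chains
(0-indexed via `Fin.rev`). -/
def chainRev {d : ℕ} (ℓ : Fin d → ℕ) (a : ∀ i, Fin (ℓ i)) : ∀ i, Fin (ℓ i) :=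
  fun i => (a i).rev

/-- The order-reversing involution on `[ℓ₁] × [ℓ₂]`. -/
def prodRev2 (ℓ₁ ℓ₂ : ℕ) (p : Fin ℓ₁ × Fin ℓ₂) : Fin ℓ₁ × Fin ℓ₂ :=
  (p.1.rev, p.2.rev)


set_option maxHeartbeats 1000000

lemma strictMono_add_le {m : ℕ} {f : Fin m → ℕ} (hf : StrictMono f) :
    ∀ (d : ℕ) (i : Fin m) (h : i.val + d < m), f i + d ≤ f ⟨i.val + d, h⟩ := by
  intro d
  induction d with
  | zero => intro i h; simp
  | succ n ih =>
    intro i h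
    have h1 : i.val + n < m := by omega
    have h2 := ih i h1
    have h3 : f ⟨i.val + n, h1⟩ < f ⟨i.val + (n + 1), h⟩ := hf (by simp [Fin.lt_def])
    omega

lemma strictMono_le_of_le {m : ℕ} {f : Fin m → ℕ} (hf : StrictMono f)
    {i j : Fin m} (h : i ≤ j) : f i + (j.val - i.val) ≤ f j := by
  have hd : i.val + (j.val - i.val) < m := by have := j.2; omega
  have := strictMono_add_le hf (j.val - i.val) i hd
  have hj : (⟨i.val + (j.val - i.val), hd⟩ : Fin m) = j := by
    apply Fin.ext; simp; omega
  rwa [hj] at this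

lemma strictMono_self_le {m : ℕ} {f : Fin m → ℕ} (hf : StrictMono f)
    (i : Fin m) : i.val ≤ f i := by
  have h0 : (0 : ℕ) < m := i.pos
  have h1 := strictMono_le_of_le hf (i := ⟨0, h0⟩) (j := i) (by simp [Fin.le_def])
  simp only [Fin.val_mk, Nat.sub_zero] at h1
  omega

/-- Count of antitone sequences of length `m` with values in `[0,k]`. -/
lemma card_antitone_bdd (m k : ℕ) :
    Nat.card {g : Fin m → ℕ // Antitone g ∧ ∀ i, g i ≤ k} = (m + k).choose m := by
  have e : {g : Fin m → ℕ // Antitone g ∧ ∀ i, g i ≤ k} ≃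
      {s : Finset (Fin (m + k)) // s.card = m} := by
    refine
      { toFun := fun g => ⟨univ.image (fun i : Fin m =>
          (⟨g.1 i.rev + i.val, by
            have := g.2.2 i.rev; have := i.2; omega⟩ : Fin (m + k))), ?_⟩
        invFun := fun s => ⟨fun i => (s.1.orderEmbOfFin s.2 i.rev).val - i.rev.val, ?_, ?_⟩
        left_inv := ?_
        right_inv := ?_ }
    · -- card of image = m
      have hinj : Function.Injective (fun i : Fin m =>
          (⟨g.1 i.rev + i.val, by have := g.2.2 i.rev; have := i.2; omega⟩ : Fin (m + k))) := by
        have hsm : StrictMono (fun i : Fin m =>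
            (⟨g.1 i.rev + i.val, by have := g.2.2 i.rev; have := i.2; omega⟩ : Fin (m + k))) := by
          intro i j hij
          have h1 : g.1 i.rev ≤ g.1 j.rev := g.2.1 (Fin.rev_le_rev.mpr hij.le)
          simp only [Fin.mk_lt_mk, Fin.lt_def] at *
          omega
        exact hsm.injective
      rw [Finset.card_image_of_injective _ hinj, Finset.card_univ, Fintype.card_fin]
    · -- antitone
      intro i j hij
      set e := s.1.orderEmbOfFin s.2 with he
      have hsm : StrictMono (fun i : Fin m => (e i).val) :=
        fun a b hab => (e.strictMono hab)
      have h1 : j.rev ≤ i.rev := Fin.rev_le_rev.mpr hij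
      have h2 := strictMono_le_of_le hsm h1
      have h3 := strictMono_self_le hsm j.rev
      simp only at h2 h3 ⊢
      omega
    · -- bound
      intro i
      set e := s.1.orderEmbOfFin s.2 with he
      have hsm : StrictMono (fun i : Fin m => (e i).val) :=
        fun a b hab => (e.strictMono hab)
      have hm : 0 < m := i.pos
      set jl : Fin m := ⟨m - 1, by omega⟩ with hjl
      have hlast : i.rev ≤ jl := by
        simp [Fin.le_def, hjl]; omega
      have h2 : (e i.rev).val + (jl.val - i.rev.val) ≤ (e jl).val :=
        strictMono_le_of_le hsm hlast
      have h3 : (e jl).val < m + k := (e jl).2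
      have h4 : i.rev.val = m - 1 - i.val := by simp [Fin.val_rev]; omega
      have h5 : jl.val = m - 1 := rfl
      have := i.2
      show (e i.rev).val - i.rev.val ≤ k
      omega
    · -- left inverse
      intro g
      apply Subtype.ext
      funext i
      set F := fun i : Fin m =>
          (⟨g.1 i.rev + i.val, by have := g.2.2 i.rev; have := i.2; omega⟩ : Fin (m + k)) with hF
      have hsm : StrictMono F := by
        intro a b hab
        have h1 : g.1 a.rev ≤ g.1 b.rev := g.2.1 (Fin.rev_le_rev.mpr hab.le)
        simp only [hF, Fin.mk_lt_mk, Fin.lt_def] at *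
        omega
      have hcard : (univ.image F).card = m := by
        rw [Finset.card_image_of_injective _ hsm.injective, Finset.card_univ, Fintype.card_fin]
      have hmem : ∀ x, F x ∈ univ.image F := fun x => Finset.mem_image_of_mem _ (mem_univ x)
      have huniq := Finset.orderEmbOfFin_unique hcard hmem hsm
      show ((univ.image F).orderEmbOfFin _ i.rev).val - i.rev.val = g.1 i
      rw [← congrFun huniq i.rev]
      simp [hF, Fin.rev_rev]
    · -- right inverse
      intro s
      apply Subtype.ext
      set e := s.1.orderEmbOfFin s.2 with he
      have hsm : StrictMono (fun i : Fin m => (e i).val) :=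
        fun a b hab => (e.strictMono hab)
      ext x
      simp only [Finset.mem_image, mem_univ, true_and]
      constructor
      · rintro ⟨i, rfl⟩
        have h1 : i.val ≤ (e i).val := strictMono_self_le hsm i
        have heq : (⟨(e i.rev.rev).val - i.rev.rev.val + i.val, by
            simp only [Fin.rev_rev]; have := (e i).2; omega⟩ : Fin (m + k)) = e i := by
          apply Fin.ext
          show (e i.rev.rev).val - i.rev.rev.val + i.val = (e i).val
          simp only [Fin.rev_rev]
          omega
        rw [heq]
        exact Finset.orderEmbOfFin_mem _ _ _
      · intro hx
        have hr : x ∈ Set.range e := by rw [he, Finset.range_orderEmbOfFin]; exact hx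
        obtain ⟨i, hi⟩ := hr
        subst hi
        refine ⟨i, ?_⟩
        apply Fin.ext
        have h1 : i.val ≤ (e i).val := strictMono_self_le hsm i
        show (e i.rev.rev).val - i.rev.rev.val + i.val = (e i).val
        simp only [Fin.rev_rev]
        omega
  rw [Nat.card_congr e, Nat.card_eq_fintype_card, Fintype.card_finset_len,
    Fintype.card_fin]

/-- Step 3: symmetric antitone profiles on `Fin ℓ₁` are counted by the binomial. -/
lemma card_sym_profiles (ℓ₁ ℓ₂ : ℕ) (heven : Even (ℓ₁ * ℓ₂)) :
    Nat.card {f : Fin ℓ₁ → ℕ // Antitone f ∧ ∀ i, f i + f i.rev = ℓ₂} =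
      (ℓ₁ / 2 + ℓ₂ / 2).choose (ℓ₁ / 2) := by
  have hpar : ℓ₁ % 2 = 0 ∨ ℓ₂ % 2 = 0 := by
    rcases Nat.even_mul.mp heven with h | h
    · exact Or.inl (Nat.even_iff.mp h)
    · exact Or.inr (Nat.even_iff.mp h)
  have hrev : ∀ i : Fin ℓ₁, i.rev.val = ℓ₁ - 1 - i.val := by
    intro i; have := i.2; simp [Fin.val_rev]; omega
  have hlow : ∀ (f : {f : Fin ℓ₁ → ℕ // Antitone f ∧ ∀ i, f i + f i.rev = ℓ₂})
      (x : Fin ℓ₁), x.val < ℓ₁ / 2 → ℓ₂ - ℓ₂ / 2 ≤ f.1 x ∧ f.1 x ≤ ℓ₂ := by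
    intro f x hx
    have hs := f.2.2 x
    have hxr : x ≤ x.rev := by
      rw [Fin.le_def, hrev]; have := x.2; omega
    have hmono := f.2.1 hxr
    omega
  have e : {f : Fin ℓ₁ → ℕ // Antitone f ∧ ∀ i, f i + f i.rev = ℓ₂} ≃
      {g : Fin (ℓ₁ / 2) → ℕ // Antitone g ∧ ∀ i, g i ≤ ℓ₂ / 2} := by
    refine
      { toFun := fun f => ⟨fun i => f.1 ⟨i.val, by have := i.2; omega⟩ - (ℓ₂ - ℓ₂ / 2),
          ?_, ?_⟩
        invFun := fun g => ⟨fun i =>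
          if h : i.val < ℓ₁ / 2 then (ℓ₂ - ℓ₂ / 2) + g.1 ⟨i.val, h⟩
          else if h' : i.rev.val < ℓ₁ / 2 then ℓ₂ / 2 - g.1 ⟨i.rev.val, h'⟩
          else ℓ₂ / 2, ?_, ?_⟩
        left_inv := ?_
        right_inv := ?_ }
    · -- antitone of toFun
      intro i j hij
      have hij' : i.val ≤ j.val := hij
      have h1 := f.2.1 (show (⟨i.val, by have := i.2; omega⟩ : Fin ℓ₁) ≤
        ⟨j.val, by have := j.2; omega⟩ from hij')
      dsimp only
      omega
    · -- bound of toFun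
      intro i
      have h1 := hlow f ⟨i.val, by have := i.2; omega⟩ i.2
      dsimp only
      omega
    · -- antitone of invFun
      intro i j hij
      have hij' : i.val ≤ j.val := hij
      have hri := hrev i
      have hrj := hrev j
      have hi2 := i.2
      have hj2 := j.2
      dsimp only
      rcases lt_or_ge j.val (ℓ₁ / 2) with hj | hj
      · have hi : i.val < ℓ₁ / 2 := by omega
        rw [dif_pos hi, dif_pos hj]
        have := g.2.1 (show (⟨i.val, hi⟩ : Fin (ℓ₁ / 2)) ≤ ⟨j.val, hj⟩ from hij')
        omega
      · rw [dif_neg (by omega : ¬ j.val < ℓ₁ / 2)]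
        rcases lt_or_ge i.val (ℓ₁ / 2) with hi | hi
        · rw [dif_pos hi]
          have hbi := g.2.2 ⟨i.val, hi⟩
          split_ifs with h'
          · have hbj := g.2.2 ⟨j.rev.val, h'⟩; omega
          · omega
        · rw [dif_neg (by omega : ¬ i.val < ℓ₁ / 2)]
          rcases lt_or_ge j.rev.val (ℓ₁ / 2) with hj' | hj'
          · rw [dif_pos hj']
            rcases lt_or_ge i.rev.val (ℓ₁ / 2) with hi' | hi'
            · rw [dif_pos hi']
              have := g.2.1 (show (⟨j.rev.val, hj'⟩ : Fin (ℓ₁ / 2)) ≤ ⟨i.rev.val, hi'⟩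
                from by show j.rev.val ≤ i.rev.val; omega)
              have hbj := g.2.2 ⟨j.rev.val, hj'⟩
              omega
            · rw [dif_neg (by omega : ¬ i.rev.val < ℓ₁ / 2)]
              have hbj := g.2.2 ⟨j.rev.val, hj'⟩
              omega
          · rw [dif_neg (by omega : ¬ j.rev.val < ℓ₁ / 2),
              dif_neg (by omega : ¬ i.rev.val < ℓ₁ / 2)]
    · -- symmetry of invFun
      intro i
      have hri := hrev i
      have hrri := hrev i.rev
      have hi2 := i.2
      have hir2 := i.rev.2
      dsimp only
      rcases lt_or_ge i.val (ℓ₁ / 2) with hi | hi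
      · rw [dif_pos hi, dif_neg (by omega : ¬ i.rev.val < ℓ₁ / 2),
          dif_pos (by omega : i.rev.rev.val < ℓ₁ / 2)]
        have hb := g.2.2 ⟨i.rev.rev.val, by omega⟩
        have hq : (⟨i.rev.rev.val, by omega⟩ : Fin (ℓ₁ / 2)) = ⟨i.val, hi⟩ := by
          apply Fin.ext; show i.rev.rev.val = i.val; omega
        rw [hq] at hb ⊢
        omega
      · rw [dif_neg (by omega : ¬ i.val < ℓ₁ / 2)]
        rcases lt_or_ge i.rev.val (ℓ₁ / 2) with hi' | hi'
        · rw [dif_pos hi', dif_pos hi']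
          have hb := g.2.2 ⟨i.rev.val, hi'⟩
          omega
        · rw [dif_neg (by omega : ¬ i.rev.val < ℓ₁ / 2),
            dif_neg (by omega : ¬ i.rev.val < ℓ₁ / 2),
            dif_neg (by omega : ¬ i.rev.rev.val < ℓ₁ / 2)]
          omega
    · -- left inverse : invFun (toFun f) = f
      intro f
      apply Subtype.ext
      funext i
      have hi2 := i.2
      have hri := hrev i
      have hs := f.2.2 i
      dsimp only
      rcases lt_or_ge i.val (ℓ₁ / 2) with hi | hi
      · rw [dif_pos hi]
        have hq : (⟨(⟨i.val, hi⟩ : Fin (ℓ₁ / 2)).val, by omega⟩ : Fin ℓ₁) = i :=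
          Fin.ext rfl
        rw [hq]
        have h1 := hlow f i hi
        omega
      · rw [dif_neg (by omega : ¬ i.val < ℓ₁ / 2)]
        rcases lt_or_ge i.rev.val (ℓ₁ / 2) with hi' | hi'
        · rw [dif_pos hi']
          have hq : (⟨(⟨i.rev.val, hi'⟩ : Fin (ℓ₁ / 2)).val, by omega⟩ : Fin ℓ₁) = i.rev :=
            Fin.ext rfl
          rw [hq]
          have h1 := hlow f i.rev hi'
          omega
        · -- middle element
          have hmid : i.rev = i := by apply Fin.ext; omega
          rw [dif_neg (by omega : ¬ i.rev.val < ℓ₁ / 2)]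
          rw [hmid] at hs
          omega
    · -- right inverse : toFun (invFun g) = g
      intro g
      apply Subtype.ext
      funext i
      have hi2 := i.2
      dsimp only
      rw [dif_pos (show (⟨i.val, by omega⟩ : Fin ℓ₁).val < ℓ₁ / 2 from hi2)]
      have hq : (⟨(⟨i.val, by omega⟩ : Fin ℓ₁).val, hi2⟩ : Fin (ℓ₁ / 2)) = i :=
        Fin.ext rfl
      rw [hq]
      have hb := g.2.2 i
      omega
  rw [Nat.card_congr e, card_antitone_bdd]

/-- A down-closed subset of `Fin n` is an initial segment. -/
lemma downclosed_mem_iff {n : ℕ} (T : Finset (Fin n))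
    (hT : ∀ a ∈ T, ∀ b, b ≤ a → b ∈ T) (j : Fin n) : j ∈ T ↔ j.val < T.card := by
  constructor
  · intro hj
    have hsub : Finset.Iic j ⊆ T := fun b hb => hT j hj b (Finset.mem_Iic.mp hb)
    have := Finset.card_le_card hsub
    rw [Fin.card_Iic] at this
    omega
  · intro hj
    by_contra hjT
    have hsub : T ⊆ Finset.Iio j := by
      intro t ht
      rw [Finset.mem_Iio]
      rcases lt_or_ge t j with h | h
      · exact h
      · exact absurd (hT t ht j h) hjT
    have := Finset.card_le_card hsub
    rw [Fin.card_Iio] at this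
    omega

lemma card_filter_val_lt {n c : ℕ} (hc : c ≤ n) :
    (univ.filter (fun j : Fin n => j.val < c)).card = c := by
  conv_rhs => rw [← Finset.card_range c]
  exact Finset.card_bij' (fun j _ => j.val) (fun a ha => ⟨a, by
      simp only [Finset.mem_range] at ha; omega⟩)
    (by intro j hj; simp only [Finset.mem_filter] at hj; simp [Finset.mem_range, hj.2])
    (by intro a ha; simp only [Finset.mem_range] at ha
        simp only [Finset.mem_filter, Finset.mem_univ, true_and]; exact ha)
    (by intro j hj; apply Fin.ext; rfl)
    (by intro a ha; rfl)


/-- The number of self-complementary ideals of `[ℓ₁] × [ℓ₂]` (with `ℓ₁ℓ₂` even) is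
`C(⌊ℓ₁/2⌋ + ⌊ℓ₂/2⌋, ⌊ℓ₁/2⌋)`. -/
theorem card_scIdeals_two_chains (ℓ₁ ℓ₂ : ℕ) (h₁ : 0 < ℓ₁) (h₂ : 0 < ℓ₂)
    (heven : Even (ℓ₁ * ℓ₂)) :
    Nat.card {I : Finset (Fin ℓ₁ × Fin ℓ₂) // IsSCIdeal (prodRev2 ℓ₁ ℓ₂) I} =
      Nat.choose (ℓ₁ / 2 + ℓ₂ / 2) (ℓ₁ / 2) := by
  classical
  have hrev2 : ∀ j : Fin ℓ₂, j.rev.val = ℓ₂ - 1 - j.val := by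
    intro j; have := j.2; simp [Fin.val_rev]; omega
  -- membership characterization for SC ideals
  have hmem : ∀ (I : {I : Finset (Fin ℓ₁ × Fin ℓ₂) // IsSCIdeal (prodRev2 ℓ₁ ℓ₂) I})
      (i : Fin ℓ₁) (j : Fin ℓ₂),
      ((i, j) ∈ I.1 ↔ j.val < (univ.filter (fun j' : Fin ℓ₂ => (i, j') ∈ I.1)).card) := by
    intro I i j
    have hdc : ∀ a ∈ univ.filter (fun j' : Fin ℓ₂ => (i, j') ∈ I.1), ∀ b, b ≤ a →
        b ∈ univ.filter (fun j' : Fin ℓ₂ => (i, j') ∈ I.1) := by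
      intro a ha b hb
      simp only [Finset.mem_filter, Finset.mem_univ, true_and] at ha ⊢
      exact I.2.1 (i, a) ha (i, b) ⟨le_refl i, hb⟩
    have := downclosed_mem_iff _ hdc j
    simp only [Finset.mem_filter, Finset.mem_univ, true_and] at this
    exact this
  have e : {I : Finset (Fin ℓ₁ × Fin ℓ₂) // IsSCIdeal (prodRev2 ℓ₁ ℓ₂) I} ≃
      {f : Fin ℓ₁ → ℕ // Antitone f ∧ ∀ i, f i + f i.rev = ℓ₂} := by
    refine
      { toFun := fun I => ⟨fun i => (univ.filter (fun j : Fin ℓ₂ => (i, j) ∈ I.1)).card,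
          ?_, ?_⟩
        invFun := fun f => ⟨univ.filter (fun p : Fin ℓ₁ × Fin ℓ₂ => p.2.val < f.1 p.1),
          ?_, ?_⟩
        left_inv := ?_
        right_inv := ?_ }
    · -- antitone
      intro i i' hii'
      dsimp only
      apply Finset.card_le_card
      intro j hj
      simp only [Finset.mem_filter, Finset.mem_univ, true_and] at hj ⊢
      exact I.2.1 (i', j) hj (i, j) ⟨hii', le_refl j⟩
    · -- sum
      intro i
      dsimp only
      have hcompl : (univ.filter (fun j : Fin ℓ₂ => (i.rev, j) ∈ I.1)).card =
          (univ.filter (fun j : Fin ℓ₂ => (i, j) ∉ I.1)).card := by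
        exact Finset.card_bij' (fun j _ => j.rev) (fun j _ => j.rev)
          (by intro j hj
              simp only [Finset.mem_filter, Finset.mem_univ, true_and] at hj ⊢
              have := (I.2.2 (i.rev, j)).mp hj
              simpa [prodRev2, Fin.rev_rev] using this)
          (by intro j hj
              simp only [Finset.mem_filter, Finset.mem_univ, true_and] at hj ⊢
              apply (I.2.2 (i.rev, j.rev)).mpr
              simpa [prodRev2, Fin.rev_rev] using hj)
          (by intro j _; exact Fin.rev_rev j)
          (by intro j _; exact Fin.rev_rev j)
      rw [hcompl]
      have hh := Finset.card_filter_add_card_filter_not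
        (s := (univ : Finset (Fin ℓ₂))) (p := fun j : Fin ℓ₂ => (i, j) ∈ I.1)
      rw [Finset.card_univ, Fintype.card_fin] at hh
      exact hh
    · -- ideal
      intro a ha b hb
      simp only [Finset.mem_filter, Finset.mem_univ, true_and] at ha ⊢
      have hb1 : b.1 ≤ a.1 := hb.1
      have hb2 : b.2.val ≤ a.2.val := hb.2
      have := f.2.1 hb1
      omega
    · -- self-complementary
      intro p
      simp only [Finset.mem_filter, Finset.mem_univ, true_and, prodRev2]
      have hs := f.2.2 p.1
      have h1 := hrev2 p.2
      have h2 := p.2.2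
      omega
    · -- left inverse
      intro I
      apply Subtype.ext
      ext p
      obtain ⟨i, j⟩ := p
      simp only [Finset.mem_filter, Finset.mem_univ, true_and]
      exact (hmem I i j).symm
    · -- right inverse
      intro f
      apply Subtype.ext
      funext i
      dsimp only
      simp only [Finset.mem_filter, Finset.mem_univ, true_and]
      have hle : f.1 i ≤ ℓ₂ := by have := f.2.2 i; omega
      exact card_filter_val_lt hle
  rw [Nat.card_congr e, card_sym_profiles ℓ₁ ℓ₂ heven]
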